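/- For every x ≥ 0, the first central moment satisfies M_n^{(α,β)}[t ↦ (t − x)](x) = (α + 1 + β x)/(n − β). -/

import Mathlib

open MeasureTheory Real Filter

/-- The Szász–Mirakyan basis functions `ψ_{n,k}(x) = e^{-nx} (nx)^k / k!`. -/
noncomputable def psi (n k : ℕ) (x : ℝ) : ℝ :=
  Real.exp (-(n * x)) * (n * x) ^ k / (Nat.factorial k)

/-- The Szász–Mirakyan–Laguerre–Durrmeyer operator `M_n^{(α,β)}`. -/
noncomputable def M (α β : ℝ) (n : ℕ) (f : ℝ → ℝ) (x : ℝ) : ℝ :=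
  ∑' k : ℕ, (((n : ℝ) - β) ^ ((k : ℝ) + α + 1) / Real.Gamma ((k : ℝ) + α + 1)) *
    (∫ t in Set.Ioi (0 : ℝ), f t * t ^ ((k : ℝ) + α) * Real.exp (-((n : ℝ) - β) * t)) *
    psi n k x

/-- The `r`-th moment `μ_r^{(α,β)}(x) = M_n^{(α,β)}[t ↦ t^r](x)`. -/
noncomputable def mu (α β : ℝ) (n : ℕ) (r : ℕ) (x : ℝ) : ℝ :=
  M α β n (fun t => t ^ r) x

lemma aux_tsum_exp (y : ℝ) : ∑' k : ℕ, y ^ k / (Nat.factorial k) = Real.exp y := by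
  rw [Real.exp_eq_exp_ℝ, NormedSpace.exp_eq_tsum_div]

lemma aux_summable_k (y : ℝ) :
    Summable (fun k : ℕ => (k : ℝ) * (y ^ k / (Nat.factorial k))) := by
  rw [← summable_nat_add_iff 1]
  have : (fun k : ℕ => ((k + 1 : ℕ) : ℝ) * (y ^ (k + 1) / (Nat.factorial (k + 1))))
      = fun k : ℕ => y * (y ^ k / (Nat.factorial k)) := by
    funext k
    have hk : (Nat.factorial (k + 1) : ℝ) = (k + 1) * Nat.factorial k := by
      rw [Nat.factorial_succ]; push_cast; ring
    have h0 : (Nat.factorial k : ℝ) ≠ 0 := by positivity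
    have h1 : ((k : ℝ) + 1) ≠ 0 := by positivity
    rw [hk]
    push_cast
    field_simp
    ring
  rw [this]
  exact (Real.summable_pow_div_factorial y).mul_left y

lemma aux_tsum_k (y : ℝ) :
    ∑' k : ℕ, (k : ℝ) * (y ^ k / (Nat.factorial k)) = y * Real.exp y := by
  rw [Summable.tsum_eq_zero_add (aux_summable_k y)]
  simp only [Nat.cast_zero, zero_mul, zero_add]
  have : (fun k : ℕ => ((k + 1 : ℕ) : ℝ) * (y ^ (k + 1) / (Nat.factorial (k + 1))))
      = fun k : ℕ => y * (y ^ k / (Nat.factorial k)) := by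
    funext k
    have hk : (Nat.factorial (k + 1) : ℝ) = (k + 1) * Nat.factorial k := by
      rw [Nat.factorial_succ]; push_cast; ring
    have h0 : (Nat.factorial k : ℝ) ≠ 0 := by positivity
    have h1 : ((k : ℝ) + 1) ≠ 0 := by positivity
    rw [hk]
    push_cast
    field_simp
    ring
  rw [this, tsum_mul_left, aux_tsum_exp]

/-- The first central moment. -/
theorem stmt_7 (α β : ℝ) (hα : -1 < α) (n : ℕ) (hn : β < n) (x : ℝ) (hx : 0 ≤ x) :
    M α β n (fun t => t - x) x = (α + 1 + β * x) / ((n : ℝ) - β) := by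
  set a : ℝ := (n : ℝ) - β with ha_def
  have ha : 0 < a := by simp only [ha_def]; linarith
  -- The Gamma integral
  have hJ : ∀ p : ℝ, -1 < p →
      ∫ t in Set.Ioi (0 : ℝ), t ^ p * Real.exp (-a * t) = (1 / a) ^ (p + 1) * Real.Gamma (p + 1) := by
    intro p hp
    have := Real.integral_rpow_mul_exp_neg_mul_Ioi (a := p + 1) (r := a) (by linarith) ha
    simpa [neg_mul, add_sub_cancel_right] using this
  -- Integrability
  have hint : ∀ p : ℝ, -1 < p →
      IntegrableOn (fun t : ℝ => t ^ p * Real.exp (-a * t)) (Set.Ioi 0) := by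
    intro p hp
    have := integrableOn_rpow_mul_exp_neg_mul_rpow (p := 1) hp one_pos ha
    simpa [Real.rpow_one] using this
  -- compute each term
  have hterm : ∀ k : ℕ,
      (a ^ ((k : ℝ) + α + 1) / Real.Gamma ((k : ℝ) + α + 1)) *
        (∫ t in Set.Ioi (0 : ℝ), (t - x) * t ^ ((k : ℝ) + α) * Real.exp (-a * t)) *
        psi n k x
      = ((((k : ℝ) + α + 1) / a) - x) * psi n k x := by
    intro k
    set p : ℝ := (k : ℝ) + α with hp_def
    have hp : -1 < p := by have : (0:ℝ) ≤ (k:ℝ) := Nat.cast_nonneg k; simp only [hp_def]; linarith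
    have hp1 : -1 < p + 1 := by linarith
    have hsplit : ∫ t in Set.Ioi (0 : ℝ), (t - x) * t ^ p * Real.exp (-a * t)
        = (∫ t in Set.Ioi (0 : ℝ), t ^ (p + 1) * Real.exp (-a * t))
          - x * ∫ t in Set.Ioi (0 : ℝ), t ^ p * Real.exp (-a * t) := by
      rw [← integral_const_mul, ← integral_sub (hint (p+1) hp1) ((hint p hp).const_mul x)]
      refine setIntegral_congr_fun measurableSet_Ioi (fun t ht => ?_)
      have ht' : (0:ℝ) < t := ht
      have : t ^ (p + 1) = t ^ p * t := by
        rw [Real.rpow_add_one ht'.ne']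
      rw [this]; ring
    rw [hsplit, hJ (p+1) hp1, hJ p hp]
    have hΓpos : 0 < Real.Gamma (p + 1) := Real.Gamma_pos_of_pos (by linarith)
    have hΓ2 : Real.Gamma (p + 1 + 1) = (p + 1) * Real.Gamma (p + 1) := by
      rw [Real.Gamma_add_one (by linarith : p + 1 ≠ 0)]
    rw [hΓ2]
    have hpow : ∀ q : ℝ, (1 / a) ^ q = a ^ (-q) := by
      intro q; rw [one_div, Real.inv_rpow ha.le, ← Real.rpow_neg ha.le]
    have e0 : a ^ (-(p + 1 + 1)) = a ^ (-(p + 1)) * a⁻¹ := by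
      rw [← Real.rpow_neg_one a, ← Real.rpow_add ha]
      congr 1
      ring
    have e2 : a ^ (p + 1) * a ^ (-(p + 1)) = 1 := by
      rw [← Real.rpow_add ha, add_neg_cancel, Real.rpow_zero]
    rw [hpow, hpow, e0]
    have hmain : a ^ (p + 1) / Real.Gamma (p + 1) *
        (a ^ (-(p + 1)) * a⁻¹ * ((p + 1) * Real.Gamma (p + 1)) - x * (a ^ (-(p + 1)) * Real.Gamma (p + 1)))
        = (p + 1) / a - x := by
      have h : a ^ (p + 1) / Real.Gamma (p + 1) *
          (a ^ (-(p + 1)) * a⁻¹ * ((p + 1) * Real.Gamma (p + 1)) - x * (a ^ (-(p + 1)) * Real.Gamma (p + 1)))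
          = (a ^ (p + 1) * a ^ (-(p + 1))) * ((p + 1) / a - x) := by
        field_simp
      rw [h, e2, one_mul]
    rw [hmain]
  -- now sum up
  rw [M]
  simp only [← ha_def, hterm]
  set y : ℝ := (n : ℝ) * x with hy_def
  have hψ : ∀ k : ℕ, psi n k x = Real.exp (-y) * (y ^ k / (Nat.factorial k)) := by
    intro k; rw [psi]; ring
  have hsum1 : Summable (fun k : ℕ => (1 / a) * (Real.exp (-y) * ((k : ℝ) * (y ^ k / (Nat.factorial k))))) :=
    ((aux_summable_k y).mul_left _).mul_left _
  have hsum2 : Summable (fun k : ℕ => ((α + 1) / a - x) * (Real.exp (-y) * (y ^ k / (Nat.factorial k)))) :=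
    ((Real.summable_pow_div_factorial y).mul_left _).mul_left _
  have hre : ∀ k : ℕ, (((k : ℝ) + α + 1) / a - x) * psi n k x
      = (1 / a) * (Real.exp (-y) * ((k : ℝ) * (y ^ k / (Nat.factorial k))))
        + ((α + 1) / a - x) * (Real.exp (-y) * (y ^ k / (Nat.factorial k))) := by
    intro k; rw [hψ k]; field_simp; ring
  calc (∑' k : ℕ, (((k : ℝ) + α + 1) / a - x) * psi n k x)
      = ∑' k : ℕ, ((1 / a) * (Real.exp (-y) * ((k : ℝ) * (y ^ k / (Nat.factorial k))))
        + ((α + 1) / a - x) * (Real.exp (-y) * (y ^ k / (Nat.factorial k)))) := by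
        exact tsum_congr hre
    _ = (1 / a) * (Real.exp (-y) * (y * Real.exp y))
        + ((α + 1) / a - x) * (Real.exp (-y) * Real.exp y) := by
        rw [Summable.tsum_add hsum1 hsum2]
        simp only [tsum_mul_left]
        rw [aux_tsum_k, aux_tsum_exp]
    _ = (α + 1 + β * x) / a := by
        rw [← Real.exp_add]
        simp only [neg_add_cancel, Real.exp_zero]
        have : Real.exp (-y) * (y * Real.exp y) = y := by
          rw [mul_comm y (Real.exp y), ← mul_assoc, ← Real.exp_add]
          simp
        rw [this]
        have hy : y = (n : ℝ) * x := rfl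
        have ha' : a ≠ 0 := ha.ne'
        field_simp [hy_def, ha_def]
        ring
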